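/- For odd k, the graph K_{2k+1} admits a path decomposition into k+1 paths in which vertex v_{2k+1} is incident to an end edge of each of k of the paths; consequently one may delete any star of up to 2k−1 edges centered at v_{2k+1} and retain a path decomposition into at most k+1 paths. -/

import Mathlib

open SimpleGraph

/-- A path decomposition of `G`: a list of paths such that every edge of `G`
lies in exactly one of them. -/
def IsPathDecomp {V : Type*} (G : SimpleGraph V)
    (P : List (Σ u v : V, G.Walk u v)) : Prop :=
  (∀ p ∈ P, p.2.2.IsPath) ∧
  P.Pairwise (fun p q => ∀ e, e ∈ p.2.2.edges → e ∉ q.2.2.edges) ∧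
  ∀ e, e ∈ G.edgeSet ↔ ∃ p ∈ P, e ∈ p.2.2.edges

namespace GallaiAux

/-- Walk along a function. -/
def funWalk {V : Type*} (G : SimpleGraph V) (f : ℕ → V) :
    (n : ℕ) → (∀ t, t < n → G.Adj (f t) (f (t+1))) → G.Walk (f 0) (f n)
  | 0, _ => SimpleGraph.Walk.nil
  | n+1, h => (funWalk G f n (fun t ht => h t (by omega))).concat (h n (by omega))

lemma support_funWalk {V : Type*} {G : SimpleGraph V} (f : ℕ → V) (n : ℕ)
    (h : ∀ t, t < n → G.Adj (f t) (f (t+1))) :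
    (funWalk G f n h).support = (List.range (n+1)).map f := by
  induction n with
  | zero => simp [funWalk, List.range_succ]
  | succ n ih =>
      rw [funWalk, SimpleGraph.Walk.support_concat, ih, @List.range_succ (n+1)]
      simp

lemma edges_funWalk {V : Type*} {G : SimpleGraph V} (f : ℕ → V) (n : ℕ)
    (h : ∀ t, t < n → G.Adj (f t) (f (t+1))) :
    (funWalk G f n h).edges = (List.range n).map (fun t => s(f t, f (t+1))) := by
  induction n with
  | zero => simp [funWalk]
  | succ n ih =>
      rw [funWalk, SimpleGraph.Walk.edges_concat, ih, @List.range_succ n]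
      simp

lemma length_funWalk {V : Type*} {G : SimpleGraph V} (f : ℕ → V) (n : ℕ)
    (h : ∀ t, t < n → G.Adj (f t) (f (t+1))) :
    (funWalk G f n h).length = n := by
  induction n with
  | zero => rfl
  | succ n ih => rw [funWalk, SimpleGraph.Walk.length_concat, ih]

lemma nodup_map_range {α : Type*} {f : ℕ → α} {n : ℕ}
    (h : ∀ x < n, ∀ y < n, f x = f y → x = y) :
    ((List.range n).map f).Nodup :=
  (@List.nodup_range n).map_on (by
    intro x hx y hy hxy
    exact h x (List.mem_range.1 hx) y (List.mem_range.1 hy) hxy)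

lemma isPath_funWalk {V : Type*} {G : SimpleGraph V} (f : ℕ → V) (n : ℕ)
    (h : ∀ t, t < n → G.Adj (f t) (f (t+1)))
    (hinj : ∀ x < n + 1, ∀ y < n + 1, f x = f y → x = y) :
    (funWalk G f n h).IsPath := by
  rw [SimpleGraph.Walk.isPath_def, support_funWalk]
  exact nodup_map_range hinj

lemma mem_edges_funWalk {V : Type*} {G : SimpleGraph V} {f : ℕ → V} {n : ℕ}
    {h : ∀ t, t < n → G.Adj (f t) (f (t+1))} {e : Sym2 V}
    (he : e ∈ (funWalk G f n h).edges) : ∃ t, t < n ∧ e = s(f t, f (t+1)) := by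
  rw [edges_funWalk] at he
  simp only [List.mem_map, List.mem_range] at he
  obtain ⟨t, ht, rfl⟩ := he
  exact ⟨t, ht, rfl⟩

/-- Decomposition from counting. -/
lemma isPathDecomp_of_card {V : Type*} [DecidableEq V] {G : SimpleGraph V}
    {P : List (Σ u v : V, G.Walk u v)} (E : Finset (Sym2 V))
    (hE : ∀ e, e ∈ E ↔ e ∈ G.edgeSet)
    (h1 : ∀ p ∈ P, p.2.2.IsPath)
    (h2 : P.Pairwise (fun p q => ∀ e, e ∈ p.2.2.edges → e ∉ q.2.2.edges))
    (h3 : (P.map (fun p => p.2.2.length)).sum = E.card) :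
    IsPathDecomp G P := by
  refine ⟨h1, h2, fun e => ⟨fun he => ?_, ?_⟩⟩
  · -- counting
    set L : List (Sym2 V) := (P.map (fun p => p.2.2.edges)).flatten with hL
    have hnd : L.Nodup := by
      rw [hL, List.nodup_flatten]
      constructor
      · intro l hl
        simp only [List.mem_map] at hl
        obtain ⟨p, hp, rfl⟩ := hl
        exact (h1 p hp).isTrail.edges_nodup
      · rw [List.pairwise_map]
        exact h2.imp (fun h e he1 he2 => h e he1 he2)
    have hsub : L.toFinset ⊆ E := by
      intro x hx
      rw [List.mem_toFinset, hL, List.mem_flatten] at hx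
      obtain ⟨l, hl, hxl⟩ := hx
      simp only [List.mem_map] at hl
      obtain ⟨p, hp, rfl⟩ := hl
      exact (hE x).2 (p.2.2.edges_subset_edgeSet hxl)
    have hlen : L.length = E.card := by
      rw [hL, List.length_flatten, List.map_map, ← h3]
      congr 1
      simp [Function.comp, SimpleGraph.Walk.length_edges]
    have : L.toFinset = E := by
      apply Finset.eq_of_subset_of_card_le hsub
      rw [List.toFinset_card_of_nodup hnd, hlen]
    have heL : e ∈ L.toFinset := by rw [this]; exact (hE e).2 he
    rw [List.mem_toFinset, hL, List.mem_flatten] at heL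
    obtain ⟨l, hl, hel⟩ := heL
    simp only [List.mem_map] at hl
    obtain ⟨p, hp, rfl⟩ := hl
    exact ⟨p, hp, hel⟩
  · rintro ⟨p, hp, hep⟩
    exact p.2.2.edges_subset_edgeSet hep

end GallaiAux
namespace GallaiAux

def gg (k i t : ℕ) : ZMod (2*k) :=
  if t % 2 = 0 then (i : ZMod (2*k)) - ((t/2 : ℕ) : ZMod (2*k))
  else (i : ZMod (2*k)) + (((t+1)/2 : ℕ) : ZMod (2*k))

lemma natCast_injOn {k : ℕ} (hk : 0 < k) {x y : ℕ} (hx : x < 2*k) (hy : y < 2*k)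
    (h : (x : ZMod (2*k)) = y) : x = y := by
  have hx' := ZMod.val_cast_of_lt (n := 2*k) hx
  have hy' := ZMod.val_cast_of_lt (n := 2*k) hy
  rw [← hx', h, hy']

lemma gg_injOn {k : ℕ} (hk : 0 < k) {i : ℕ} :
    ∀ t < 2*k, ∀ s < 2*k, gg k i t = gg k i s → t = s := by
  intro t ht s hs h
  unfold gg at h
  rcases Nat.even_or_odd t with het | hot <;> rcases Nat.even_or_odd s with hes | hos <;>
    [ (have hpt : t % 2 = 0 := Nat.even_iff.1 het
       have hps : s % 2 = 0 := Nat.even_iff.1 hes);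
      (have hpt : t % 2 = 0 := Nat.even_iff.1 het
       have hps : s % 2 = 1 := Nat.odd_iff.1 hos);
      (have hpt : t % 2 = 1 := Nat.odd_iff.1 hot
       have hps : s % 2 = 0 := Nat.even_iff.1 hes);
      (have hpt : t % 2 = 1 := Nat.odd_iff.1 hot
       have hps : s % 2 = 1 := Nat.odd_iff.1 hos)]
  · rw [if_pos hpt, if_pos hps] at h
    have h2 : ((t/2 : ℕ) : ZMod (2*k)) = ((s/2 : ℕ) : ZMod (2*k)) := by
      linear_combination -h
    have := natCast_injOn (x := t/2) (y := s/2) hk (by omega) (by omega) h2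
    omega
  · rw [if_pos hpt, if_neg (by omega)] at h
    have h2 : ((t/2 + (s+1)/2 : ℕ) : ZMod (2*k)) = ((0 : ℕ) : ZMod (2*k)) := by
      push_cast
      linear_combination -h
    have := natCast_injOn (x := t/2 + (s+1)/2) (y := 0) hk (by omega) (by omega) h2
    omega
  · rw [if_neg (by omega), if_pos hps] at h
    have h2 : ((s/2 + (t+1)/2 : ℕ) : ZMod (2*k)) = ((0 : ℕ) : ZMod (2*k)) := by
      push_cast
      linear_combination h
    have := natCast_injOn (x := s/2 + (t+1)/2) (y := 0) hk (by omega) (by omega) h2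
    omega
  · rw [if_neg (by omega), if_neg (by omega)] at h
    have h2 : (((t+1)/2 : ℕ) : ZMod (2*k)) = (((s+1)/2 : ℕ) : ZMod (2*k)) := by
      linear_combination h
    have := natCast_injOn (x := (t+1)/2) (y := (s+1)/2) hk (by omega) (by omega) h2
    omega

lemma gg_sum {k : ℕ} (i t : ℕ) :
    gg k i t + gg k i (t+1) = ((2*i + (t+1) % 2 : ℕ) : ZMod (2*k)) := by
  unfold gg
  rcases Nat.even_or_odd t with he | ho
  · have h1 : t % 2 = 0 := Nat.even_iff.1 he
    have h2 : (t+1) % 2 = 1 := by omega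
    have h4 : (t+1+1)/2 = t/2 + 1 := by omega
    rw [if_pos h1, if_neg (by omega), h2, h4]
    push_cast
    ring
  · have h0 : t % 2 = 1 := Nat.odd_iff.1 ho
    have h2 : (t+1) % 2 = 0 := by omega
    have h4 : (t+1)/2 = (t+1+1)/2 := by omega
    rw [if_neg (by omega), if_pos h2, h2, h4]
    push_cast
    ring

lemma gg_zero {k : ℕ} (i : ℕ) : gg k i 0 = (i : ZMod (2*k)) := by
  simp [gg]

lemma gg_one {k : ℕ} (i : ℕ) : gg k i 1 = ((i + 1 : ℕ) : ZMod (2*k)) := by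
  unfold gg
  rw [if_neg (by omega), show (1+1)/2 = 1 from rfl]
  push_cast
  ring

lemma gg_last {k : ℕ} (hk : 0 < k) (i : ℕ) :
    gg k i (2*k - 1) = ((i + k : ℕ) : ZMod (2*k)) := by
  unfold gg
  rw [if_neg (by omega), show (2*k-1+1)/2 = k from by omega]
  push_cast
  ring


/-! ### The parametric construction -/

structure Setup (k : ℕ) where
  G : SimpleGraph (Fin (2*k+1))
  β : ℕ → Fin (2*k+1)
  a : ℕ
  r : ℕ
  hk : 0 < k
  ha : a ≤ k
  hr : r < k
  har : 0 < r → a = k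
  hβi : ∀ x < 2*k, ∀ y < 2*k, β x = β y → x = y
  hβv : ∀ x < 2*k, β x ≠ Fin.last (2*k)
  hcc : ∀ x < 2*k, ∀ y < 2*k, x ≠ y → G.Adj (β x) (β y)
  hv1 : ∀ i < k - r, G.Adj (β (i+k)) (Fin.last (2*k))
  hv2 : ∀ i, a ≤ i → i < k → G.Adj (Fin.last (2*k)) (β i)

namespace Setup

variable {k : ℕ} (S : Setup k)

/-- Embedding of the cyclic vertices. -/
def ι (x : ZMod (2*k)) : Fin (2*k+1) := S.β x.val

lemma val_lt (hk : 0 < k) (x : ZMod (2*k)) : x.val < 2*k := by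
  haveI : NeZero (2*k) := ⟨by omega⟩
  exact ZMod.val_lt x

lemma ι_inj {x y : ZMod (2*k)} (h : S.ι x = S.ι y) : x = y := by
  haveI : NeZero (2*k) := ⟨by have := S.hk; omega⟩
  exact ZMod.val_injective (2*k) (S.hβi _ (val_lt S.hk x) _ (val_lt S.hk y) h)

lemma ι_ne_v (x : ZMod (2*k)) : S.ι x ≠ Fin.last (2*k) :=
  S.hβv _ (val_lt S.hk x)

lemma ι_adj {x y : ZMod (2*k)} (h : x ≠ y) : S.G.Adj (S.ι x) (S.ι y) :=
  S.hcc _ (val_lt S.hk x) _ (val_lt S.hk y) (fun hv => h (by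
    haveI : NeZero (2*k) := ⟨by have := S.hk; omega⟩
    exact ZMod.val_injective (2*k) hv))

lemma ι_cast {x : ℕ} (hx : x < 2*k) : S.ι ((x : ℕ) : ZMod (2*k)) = S.β x := by
  unfold ι
  rw [ZMod.val_cast_of_lt hx]

/-- vertex sequence of the full / truncated path at index `i`. -/
def Ffun (i t : ℕ) : Fin (2*k+1) :=
  if t < 2*k - 1 then S.ι (gg k i (t+1))
  else if t = 2*k - 1 then Fin.last (2*k)
  else S.ι (gg k i 0)

lemma Ffun_adj_lt {i t : ℕ} (ht : t + 1 < 2*k - 1) :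
    S.G.Adj (S.Ffun i t) (S.Ffun i (t+1)) := by
  have hk := S.hk
  rw [Ffun, Ffun, if_pos (by omega), if_pos ht]
  exact S.ι_adj (fun h => by
    have := gg_injOn hk (i := i) (t+1) (by omega) (t+2) (by omega) h
    omega)

lemma Ffun_adj_penult {i : ℕ} (hi : i < k) (hir : i < k - S.r) :
    S.G.Adj (S.Ffun i (2*k-2)) (S.Ffun i (2*k-2+1)) := by
  have hk := S.hk
  rw [Ffun, Ffun, if_pos (by omega), if_neg (by omega), if_pos (by omega),
    show 2*k-2+1 = 2*k-1 from by omega, gg_last hk, S.ι_cast (by omega)]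
  exact S.hv1 i hir

lemma Ffun_adj_trunc {i : ℕ} (hi : i < k) (hir : i < k - S.r) :
    ∀ t, t < 2*k - 1 → S.G.Adj (S.Ffun i t) (S.Ffun i (t+1)) := by
  intro t ht
  have hk := S.hk
  rcases (by omega : t + 1 < 2*k - 1 ∨ t = 2*k-2) with h | h
  · exact S.Ffun_adj_lt h
  · rw [h]; exact S.Ffun_adj_penult hi hir

lemma Ffun_adj_full {i : ℕ} (hi : i < k) (hia : S.a ≤ i) (hir : i < k - S.r) :
    ∀ t, t < 2*k → S.G.Adj (S.Ffun i t) (S.Ffun i (t+1)) := by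
  intro t ht
  have hk := S.hk
  rcases (by omega : t < 2*k - 1 ∨ t = 2*k-1) with h | h
  · exact S.Ffun_adj_trunc hi hir t h
  · rw [h, Ffun, Ffun, if_neg (by omega), if_pos rfl, if_neg (by omega),
      if_neg (by omega), gg_zero, S.ι_cast (by omega)]
    exact S.hv2 i hia hi

lemma Ffun_injOn {i : ℕ} (hi : i < k) :
    ∀ t < 2*k + 1, ∀ s < 2*k + 1, S.Ffun i t = S.Ffun i s → t = s := by
  have hk := S.hk
  intro t ht s hs h
  unfold Ffun at h
  by_cases h1 : t < 2*k - 1 <;> by_cases h2 : s < 2*k - 1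
  · rw [if_pos h1, if_pos h2] at h
    have := gg_injOn hk (i := i) (t+1) (by omega) (s+1) (by omega) (S.ι_inj h)
    omega
  · rcases (by omega : s = 2*k-1 ∨ s = 2*k) with rfl | rfl
    · rw [if_pos h1, if_neg (by omega), if_pos rfl] at h
      exact absurd h (S.ι_ne_v _)
    · rw [if_pos h1, if_neg (by omega), if_neg (by omega)] at h
      have := gg_injOn hk (i := i) (t+1) (by omega) 0 (by omega) (S.ι_inj h)
      omega
  · rcases (by omega : t = 2*k-1 ∨ t = 2*k) with rfl | rfl
    · rw [if_pos h2, if_neg (by omega), if_pos rfl] at h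
      exact absurd h.symm (S.ι_ne_v _)
    · rw [if_pos h2, if_neg (by omega), if_neg (by omega)] at h
      have := gg_injOn hk (i := i) 0 (by omega) (s+1) (by omega) (S.ι_inj h)
      omega
  · rcases (by omega : t = 2*k-1 ∨ t = 2*k) with rfl | rfl <;>
      rcases (by omega : s = 2*k-1 ∨ s = 2*k) with rfl | rfl
    · rfl
    · rw [if_neg (by omega), if_pos rfl, if_neg (by omega), if_neg (by omega)] at h
      exact absurd h.symm (S.ι_ne_v _)
    · rw [if_neg (by omega), if_pos rfl, if_neg (by omega), if_neg (by omega)] at h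
      exact absurd h (S.ι_ne_v _)
    · rfl

/-- Hamiltonian (full) piece, used when `a ≤ i < k - r`. -/
def wFull (i : ℕ) (hi : i < k) (hia : S.a ≤ i) (hir : i < k - S.r) :
    Σ u v : Fin (2*k+1), S.G.Walk u v :=
  ⟨_, _, funWalk S.G (S.Ffun i) (2*k) (S.Ffun_adj_full hi hia hir)⟩

/-- Truncated piece, missing the final edge back to the last vertex. -/
def wTrunc (i : ℕ) (hi : i < k) (hir : i < k - S.r) :
    Σ u v : Fin (2*k+1), S.G.Walk u v :=
  ⟨_, _, funWalk S.G (S.Ffun i) (2*k-1) (S.Ffun_adj_trunc hi hir)⟩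

/-- Zigzag Hamiltonian path avoiding the last vertex altogether. -/
def wHam (i : ℕ) : Σ u v : Fin (2*k+1), S.G.Walk u v :=
  ⟨_, _, funWalk S.G (fun t => S.ι (gg k i t)) (2*k-1) (by
    intro t ht
    have hk := S.hk
    exact S.ι_adj (fun h => by
      have := gg_injOn hk (i := i) t (by omega) (t+1) (by omega) h
      omega))⟩

/-- The short path `0 - 1 - ⋯ - (k - r)`. -/
def wPk : Σ u v : Fin (2*k+1), S.G.Walk u v :=
  ⟨_, _, funWalk S.G S.β (k - S.r) (by
    intro t ht
    have hk := S.hk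
    exact S.hcc t (by omega) (t+1) (by omega) (by omega))⟩

/-- the `i`-th piece of the decomposition, `i < k`. -/
def piece (i : ℕ) : Σ u v : Fin (2*k+1), S.G.Walk u v :=
  if h : i < k then
    if h1 : k - S.r ≤ i then S.wHam i
    else if h2 : i < S.a then S.wTrunc i h (by omega)
    else S.wFull i h (by omega) (by omega)
  else ⟨Fin.last (2*k), Fin.last (2*k), SimpleGraph.Walk.nil⟩

def decompList : List (Σ u v : Fin (2*k+1), S.G.Walk u v) :=
  (List.range k).map S.piece ++ [S.wPk]

lemma piece_eq_ham {i : ℕ} (h : i < k) (h1 : k - S.r ≤ i) : S.piece i = S.wHam i := by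
  unfold piece
  rw [dif_pos h, dif_pos h1]

lemma piece_eq_trunc {i : ℕ} (h : i < k) (h1 : ¬ k - S.r ≤ i) (h2 : i < S.a) :
    S.piece i = S.wTrunc i h (by omega) := by
  unfold piece
  rw [dif_pos h, dif_neg h1, dif_pos h2]

lemma piece_eq_full {i : ℕ} (h : i < k) (h1 : ¬ k - S.r ≤ i) (h2 : ¬ i < S.a) :
    S.piece i = S.wFull i h (by omega) (by omega) := by
  unfold piece
  rw [dif_pos h, dif_neg h1, dif_neg h2]

lemma isPath_piece (i : ℕ) : (S.piece i).2.2.IsPath := by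
  have hk := S.hk
  by_cases h : i < k
  · by_cases h1 : k - S.r ≤ i
    · rw [S.piece_eq_ham h h1]
      apply isPath_funWalk
      intro x hx y hy hxy
      exact gg_injOn hk x (by omega) y (by omega) (S.ι_inj hxy)
    · by_cases h2 : i < S.a
      · rw [S.piece_eq_trunc h h1 h2]
        apply isPath_funWalk
        intro x hx y hy hxy
        exact S.Ffun_injOn h x (by omega) y (by omega) hxy
      · rw [S.piece_eq_full h h1 h2]
        apply isPath_funWalk
        intro x hx y hy hxy
        exact S.Ffun_injOn h x (by omega) y (by omega) hxy
  · unfold piece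
    rw [dif_neg h]
    simp

lemma isPath_wPk : S.wPk.2.2.IsPath := by
  have hk := S.hk
  apply isPath_funWalk
  intro x hx y hy hxy
  exact S.hβi x (by omega) y (by omega) hxy

/-- Characterisation of the edges of the pieces. -/
lemma edge_piece {i : ℕ} (hi : i < k) {e : Sym2 (Fin (2*k+1))}
    (he : e ∈ (S.piece i).2.2.edges) :
    (∃ p, p + 1 < 2*k ∧ (1 ≤ p ∨ k - S.r ≤ i) ∧
        e = s(S.ι (gg k i p), S.ι (gg k i (p+1))))
    ∨ (e = s(S.ι ((i+k : ℕ) : ZMod (2*k)), Fin.last (2*k)) ∧ i < k - S.r)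
    ∨ (e = s(Fin.last (2*k), S.ι ((i : ℕ) : ZMod (2*k))) ∧ S.a ≤ i ∧ i < k - S.r) := by
  have hk := S.hk
  by_cases h1 : k - S.r ≤ i
  · rw [S.piece_eq_ham hi h1] at he
    obtain ⟨t, ht, rfl⟩ := mem_edges_funWalk he
    exact Or.inl ⟨t, by omega, Or.inr h1, rfl⟩
  · by_cases h2 : i < S.a
    · rw [S.piece_eq_trunc hi h1 h2] at he
      obtain ⟨t, ht, rfl⟩ := mem_edges_funWalk he
      rcases (by omega : t + 1 < 2*k - 1 ∨ t = 2*k - 2) with h | h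
      · refine Or.inl ⟨t+1, by omega, Or.inl (by omega), ?_⟩
        rw [Ffun, Ffun, if_pos (by omega), if_pos (by omega)]
      · refine Or.inr (Or.inl ⟨?_, by omega⟩)
        rw [h, Ffun, Ffun, if_pos (by omega), show 2*k-2+1 = 2*k-1 from by omega,
          if_neg (by omega), if_pos rfl, gg_last hk]
    · rw [S.piece_eq_full hi h1 h2] at he
      obtain ⟨t, ht, rfl⟩ := mem_edges_funWalk he
      rcases (by omega : t + 1 < 2*k - 1 ∨ t = 2*k - 2 ∨ t = 2*k - 1) with h | h | h
      · refine Or.inl ⟨t+1, by omega, Or.inl (by omega), ?_⟩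
        rw [Ffun, Ffun, if_pos (by omega), if_pos (by omega)]
      · refine Or.inr (Or.inl ⟨?_, by omega⟩)
        rw [h, Ffun, Ffun, if_pos (by omega), show 2*k-2+1 = 2*k-1 from by omega,
          if_neg (by omega), if_pos rfl, gg_last hk]
      · refine Or.inr (Or.inr ⟨?_, by omega, by omega⟩)
        rw [h, Ffun, Ffun, if_neg (by omega), if_pos rfl, show 2*k-1+1 = 2*k from by omega,
          if_neg (by omega), if_neg (by omega), gg_zero]

lemma edge_wPk {e : Sym2 (Fin (2*k+1))} (he : e ∈ S.wPk.2.2.edges) :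
    ∃ t, t < k - S.r ∧ e = s(S.ι ((t : ℕ) : ZMod (2*k)), S.ι ((t+1 : ℕ) : ZMod (2*k))) := by
  have hk := S.hk
  obtain ⟨t, ht, rfl⟩ := mem_edges_funWalk he
  exact ⟨t, ht, by rw [S.ι_cast (by omega), S.ι_cast (by omega)]⟩

lemma sym2_ii {x y x' y' : ZMod (2*k)}
    (h : s(S.ι x, S.ι y) = s(S.ι x', S.ι y')) : x + y = x' + y' := by
  rcases Sym2.eq_iff.1 h with ⟨h1, h2⟩ | ⟨h1, h2⟩
  · rw [S.ι_inj h1, S.ι_inj h2]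
  · rw [S.ι_inj h1, S.ι_inj h2, add_comm]

lemma sym2_vv {x y : ZMod (2*k)}
    (h : s(S.ι x, Fin.last (2*k)) = s(S.ι y, Fin.last (2*k))) : x = y := by
  rcases Sym2.eq_iff.1 h with ⟨h1, _⟩ | ⟨h1, _⟩
  · exact S.ι_inj h1
  · exact absurd h1 (S.ι_ne_v x)

lemma not_last_mem_sym2_ii (x y : ZMod (2*k)) :
    Fin.last (2*k) ∉ s(S.ι x, S.ι y) := by
  rw [Sym2.mem_iff]
  rintro (h | h) <;> exact absurd h.symm (S.ι_ne_v _)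

lemma class_inj (hk : 0 < k) {i j δ ε : ℕ} (hi : i < k) (hj : j < k)
    (hδ : δ ≤ 1) (hε : ε ≤ 1)
    (h : ((2*i+δ : ℕ) : ZMod (2*k)) = ((2*j+ε : ℕ) : ZMod (2*k))) : i = j ∧ δ = ε := by
  have := natCast_injOn hk (x := 2*i+δ) (y := 2*j+ε) (by omega) (by omega) h
  omega

/-- the circle edges of `piece i` determine the class `i`. -/
lemma disj_pieces {i j : ℕ} (hij : i < j) (hj : j < k) :
    ∀ e ∈ (S.piece i).2.2.edges, e ∉ (S.piece j).2.2.edges := by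
  have hk := S.hk
  intro e he1 he2
  rcases S.edge_piece (by omega) he1 with ⟨p, hp, _, rfl⟩ | ⟨he, _⟩ | ⟨he, _, _⟩ <;>
    rcases S.edge_piece hj he2 with ⟨q, hq, _, heq⟩ | ⟨heq, _⟩ | ⟨heq, _, _⟩
  · -- circle / circle
    have hsum := S.sym2_ii heq
    rw [gg_sum, gg_sum] at hsum
    have := class_inj hk (by omega : i < k) hj (by omega) (by omega) hsum
    omega
  · exact S.not_last_mem_sym2_ii _ _ (by rw [heq]; exact Sym2.mem_iff.2 (Or.inr rfl))
  · exact S.not_last_mem_sym2_ii _ _ (by rw [heq]; exact Sym2.mem_iff.2 (Or.inl rfl))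
  · exact S.not_last_mem_sym2_ii _ _ (by rw [← heq, he]; exact Sym2.mem_iff.2 (Or.inr rfl))
  · -- (ι(i+k), v) / (ι(j+k), v)
    rw [he] at heq
    have := natCast_injOn hk (x := i+k) (y := j+k) (by omega) (by omega) (S.sym2_vv heq)
    omega
  · -- (ι(i+k), v) / (v, ι j)
    rw [he, Sym2.eq_swap (a := Fin.last (2*k))] at heq
    have := natCast_injOn hk (x := i+k) (y := j) (by omega) (by omega) (S.sym2_vv heq)
    omega
  · exact S.not_last_mem_sym2_ii _ _ (by rw [← heq, he]; exact Sym2.mem_iff.2 (Or.inl rfl))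
  · -- (v, ι i) / (ι(j+k), v)
    rw [he, Sym2.eq_swap (a := Fin.last (2*k))] at heq
    have := natCast_injOn hk (x := j+k) (y := i) (by omega) (by omega) (S.sym2_vv heq.symm)
    omega
  · -- (v, ι i) / (v, ι j)
    rw [he, Sym2.eq_swap (a := Fin.last (2*k)), Sym2.eq_swap (a := Fin.last (2*k))] at heq
    have := natCast_injOn hk (x := i) (y := j) (by omega) (by omega) (S.sym2_vv heq)
    omega

lemma disj_piece_pk {i : ℕ} (hi : i < k) :
    ∀ e ∈ (S.piece i).2.2.edges, e ∉ S.wPk.2.2.edges := by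
  have hk := S.hk
  intro e he1 he2
  obtain ⟨t, ht, rfl⟩ := S.edge_wPk he2
  rcases S.edge_piece hi he1 with ⟨p, hp, hflag, heq⟩ | ⟨heq, _⟩ | ⟨heq, _, _⟩
  · -- circle edge
    have hsum := S.sym2_ii heq.symm
    rw [gg_sum, show ((t:ℕ) : ZMod (2*k)) + ((t+1:ℕ) : ZMod (2*k)) = ((2*t+1 : ℕ) : ZMod (2*k))
      from by push_cast; ring] at hsum
    obtain ⟨hti, hδ⟩ := class_inj hk (i := i) (j := t) (δ := (p+1)%2) (ε := 1)
      hi (by omega) (by omega) (by omega) hsum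
    subst hti
    -- now the edge {t, t+1} = {gg t 0, gg t 1}, forcing p = 0
    rw [show ((i:ℕ) : ZMod (2*k)) = gg k i 0 from (gg_zero i).symm,
      show ((i+1:ℕ) : ZMod (2*k)) = gg k i 1 from (gg_one i).symm] at heq
    have hp0 : p = 0 := by
      rcases Sym2.eq_iff.1 heq.symm with ⟨h1, h2⟩ | ⟨h1, h2⟩
      · have := gg_injOn hk (i := i) p (by omega) 0 (by omega) (S.ι_inj h1)
        omega
      · have := gg_injOn hk (i := i) p (by omega) 1 (by omega) (S.ι_inj h1)
        have := gg_injOn hk (i := i) (p+1) (by omega) 0 (by omega) (S.ι_inj h2)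
        omega
    omega
  · exact S.not_last_mem_sym2_ii _ _ (by rw [heq]; exact Sym2.mem_iff.2 (Or.inr rfl))
  · exact S.not_last_mem_sym2_ii _ _ (by rw [heq]; exact Sym2.mem_iff.2 (Or.inl rfl))

lemma pairwise_decomp :
    S.decompList.Pairwise (fun p q => ∀ e, e ∈ p.2.2.edges → e ∉ q.2.2.edges) := by
  unfold decompList
  rw [List.pairwise_append]
  refine ⟨?_, by simp, ?_⟩
  · rw [List.pairwise_map]
    refine (@List.pairwise_lt_range k).imp_of_mem ?_
    intro i j hi hj hij
    exact S.disj_pieces hij (List.mem_range.1 hj)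
  · intro p hp q hq e he1
    simp only [List.mem_map, List.mem_range] at hp
    obtain ⟨i, hi, rfl⟩ := hp
    simp only [List.mem_singleton] at hq
    subst hq
    exact S.disj_piece_pk hi e he1

lemma length_piece {i : ℕ} (hi : i < k) :
    (S.piece i).2.2.length = if k - S.r ≤ i ∨ i < S.a then 2*k - 1 else 2*k := by
  by_cases h1 : k - S.r ≤ i
  · rw [S.piece_eq_ham hi h1, if_pos (Or.inl h1)]
    exact length_funWalk _ _ _
  · by_cases h2 : i < S.a
    · rw [S.piece_eq_trunc hi h1 h2, if_pos (Or.inr h2)]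
      exact length_funWalk _ _ _
    · rw [S.piece_eq_full hi h1 h2, if_neg (by tauto)]
      exact length_funWalk _ _ _

lemma sum_map_range {f : ℕ → ℕ} : ∀ n, ((List.range n).map f).sum = ∑ i ∈ Finset.range n, f i := by
  intro n
  induction n with
  | zero => simp
  | succ n ih =>
      rw [List.range_succ, List.map_append, List.sum_append, Finset.sum_range_succ, ih]
      simp

lemma card_filter_cond :
    ((Finset.range k).filter (fun i => k - S.r ≤ i ∨ i < S.a)).card = S.a := by
  have hk := S.hk
  have ha := S.ha
  have hr := S.hr
  rcases Nat.eq_zero_or_pos S.r with h0 | h0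
  · have : ((Finset.range k).filter (fun i => k - S.r ≤ i ∨ i < S.a))
        = (Finset.range k).filter (fun i => i < S.a) := by
      ext i
      simp only [Finset.mem_filter, Finset.mem_range]
      omega
    rw [this]
    have : (Finset.range k).filter (fun i => i < S.a) = Finset.range S.a := by
      ext i
      simp only [Finset.mem_filter, Finset.mem_range]
      omega
    rw [this, Finset.card_range]
  · have hak := S.har h0
    have : ((Finset.range k).filter (fun i => k - S.r ≤ i ∨ i < S.a))
        = Finset.range k := by
      ext i
      simp only [Finset.mem_filter, Finset.mem_range]
      omega
    rw [this, Finset.card_range, hak]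

lemma sum_lengths :
    (S.decompList.map (fun p => p.2.2.length)).sum + (S.a + S.r) = 2*k*k + k := by
  have hk := S.hk
  have ha := S.ha
  have hr := S.hr
  unfold decompList
  rw [List.map_append, List.sum_append, List.map_map]
  have h1 : ((List.range k).map (fun i => (S.piece i).2.2.length)).sum + S.a = 2*k*k := by
    rw [sum_map_range]
    have : ∀ i ∈ Finset.range k, (S.piece i).2.2.length
        = if k - S.r ≤ i ∨ i < S.a then 2*k - 1 else 2*k := by
      intro i hi
      exact S.length_piece (Finset.mem_range.1 hi)
    rw [Finset.sum_congr rfl this]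
    have hsplit : (∑ i ∈ Finset.range k, if k - S.r ≤ i ∨ i < S.a then 2*k - 1 else 2*k)
        + (∑ i ∈ Finset.range k, if k - S.r ≤ i ∨ i < S.a then 1 else 0)
        = ∑ i ∈ Finset.range k, 2*k := by
      rw [← Finset.sum_add_distrib]
      apply Finset.sum_congr rfl
      intro i _
      split_ifs <;> omega
    have hboole : (∑ i ∈ Finset.range k, if k - S.r ≤ i ∨ i < S.a then 1 else 0) = S.a := by
      rw [← Finset.card_filter]
      exact S.card_filter_cond
    rw [Finset.sum_const, Finset.card_range, smul_eq_mul] at hsplit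
    have hmul : k * (2*k) = 2*k*k := by ring
    omega
  have h2 : ([S.wPk].map (fun p => p.2.2.length)).sum = k - S.r := by
    simp only [List.map_cons, List.map_nil, List.sum_cons, List.sum_nil, add_zero]
    exact length_funWalk _ _ _
  rw [h2]
  have hcomp : ((List.range k).map ((fun (p : Σ u v : Fin (2*k+1), S.G.Walk u v) => p.2.2.length) ∘ S.piece)).sum
      = ((List.range k).map (fun i => (S.piece i).2.2.length)).sum := by
    rfl
  rw [hcomp]
  omega

lemma decompList_isPathDecomp (E : Finset (Sym2 (Fin (2*k+1))))
    (hE : ∀ e, e ∈ E ↔ e ∈ S.G.edgeSet)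
    (hcard : E.card + (S.a + S.r) = 2*k*k + k) :
    IsPathDecomp S.G S.decompList := by
  apply isPathDecomp_of_card E hE
  · intro p hp
    unfold decompList at hp
    rcases List.mem_append.1 hp with h | h
    · simp only [List.mem_map, List.mem_range] at h
      obtain ⟨i, _, rfl⟩ := h
      exact S.isPath_piece i
    · simp only [List.mem_singleton] at h
      subst h
      exact S.isPath_wPk
  · exact S.pairwise_decomp
  · have := S.sum_lengths
    omega

lemma decompList_length : S.decompList.length = k + 1 := by
  unfold decompList
  simp

end Setup

end GallaiAux

open GallaiAux

set_option maxHeartbeats 1600000 in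
/-- For odd `k`, `K_{2k+1}` has a path decomposition into `k+1` paths in which
the last vertex meets an end edge of `k` of the paths; consequently any star of
at most `2k-1` edges centered there can be deleted while keeping a path
decomposition into at most `k+1` paths. -/
theorem gallai_star_removal_odd_k (k : ℕ) (hk : Odd k) :
    (∃ P : List (Σ u v : Fin (2 * k + 1), (⊤ : SimpleGraph (Fin (2 * k + 1))).Walk u v),
      IsPathDecomp ⊤ P ∧ P.length = k + 1 ∧
      k ≤ P.countP (fun p => decide (∃ e,
        (p.2.2.edges.head? = some e ∨ p.2.2.edges.getLast? = some e) ∧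
        Fin.last (2 * k) ∈ e))) ∧
    ∀ A : Finset (Fin (2 * k + 1)), Fin.last (2 * k) ∉ A → A.card ≤ 2 * k - 1 →
      ∃ Q : List (Σ x y : Fin (2 * k + 1),
          ((⊤ : SimpleGraph (Fin (2 * k + 1))).deleteEdges
            {e | ∃ u ∈ A, e = s(Fin.last (2 * k), u)}).Walk x y),
        IsPathDecomp ((⊤ : SimpleGraph (Fin (2 * k + 1))).deleteEdges
          {e | ∃ u ∈ A, e = s(Fin.last (2 * k), u)}) Q ∧ Q.length ≤ k + 1 := by
  have hk' : 0 < k := by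
    rcases hk with ⟨j, rfl⟩; omega
  have hmul : (2*k+1) * (2*k+1-1) = (2*k*k + k) * 2 := by
    rw [show 2*k+1-1 = 2*k from rfl]; ring
  have hcard_top : (⊤ : SimpleGraph (Fin (2*k+1))).edgeFinset.card = 2*k*k + k := by
    rw [SimpleGraph.card_edgeFinset_top_eq_card_choose_two, Fintype.card_fin,
      Nat.choose_two_right]
    omega
  constructor
  · -- Part 1 : the decomposition of the complete graph
    let S1 : Setup k := {
      G := ⊤
      β := fun x => ⟨min x (2*k-1), by omega⟩
      a := 0
      r := 0
      hk := hk'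
      ha := by omega
      hr := hk'
      har := by omega
      hβi := by
        intro x hx y hy h
        have := congrArg Fin.val h
        simp only at this
        omega
      hβv := by
        intro x hx h
        have := congrArg Fin.val h
        rw [Fin.val_last] at this
        simp only at this
        omega
      hcc := by
        intro x hx y hy hxy
        rw [SimpleGraph.top_adj]
        intro h
        have := congrArg Fin.val h
        simp only at this
        omega
      hv1 := by
        intro i hi
        rw [SimpleGraph.top_adj]
        intro h
        have := congrArg Fin.val h
        rw [Fin.val_last] at this
        simp only at this
        omega
      hv2 := by
        intro i _ hi
        rw [SimpleGraph.top_adj]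
        intro h
        have := congrArg Fin.val h
        rw [Fin.val_last] at this
        simp only at this
        omega }
    refine ⟨S1.decompList, ?_, S1.decompList_length, ?_⟩
    · apply S1.decompList_isPathDecomp (⊤ : SimpleGraph (Fin (2*k+1))).edgeFinset
      · intro e; exact SimpleGraph.mem_edgeFinset
      · rw [hcard_top]; rfl
    · -- count the end edges at the last vertex
      unfold Setup.decompList
      rw [List.countP_append]
      refine le_trans (le_of_eq ?_) (Nat.le_add_right _ _)
      refine ((List.countP_eq_length.2 ?_).trans (by simp)).symm
      intro p hp
      simp only [List.mem_map, List.mem_range] at hp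
      obtain ⟨i, hi, rfl⟩ := hp
      apply decide_eq_true
      have hfull := S1.piece_eq_full hi (by show ¬ k - 0 ≤ i; omega) (by show ¬ i < 0; omega)
      refine ⟨s(Fin.last (2*k), S1.ι (gg k i 0)), Or.inr ?_, Sym2.mem_iff.2 (Or.inl rfl)⟩
      rw [hfull]
      have hedges : (S1.wFull i hi (by show 0 ≤ i; omega) (by show i < k - 0; omega)).2.2.edges
          = (List.range (2*k)).map (fun t => s(S1.Ffun i t, S1.Ffun i (t+1))) :=
        edges_funWalk _ _ _
      have hrange : List.range (2*k) = List.range (2*k-1) ++ [2*k-1] := by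
        rw [← List.range_succ]
        congr 1
        omega
      rw [hedges, hrange, List.map_append, List.map_cons, List.map_nil, List.getLast?_concat]
      congr 1
      rw [Setup.Ffun, Setup.Ffun, if_neg (by omega), if_pos rfl,
        if_neg (by omega), if_neg (by omega)]
  · -- Part 2 : star removal
    intro A hvA hAcard
    -- the two injections
    let eA : Fin A.card → Fin (2*k+1) := fun j => (A.equivFin.symm j : Fin (2*k+1))
    let C : Finset (Fin (2*k+1)) := Finset.univ \ insert (Fin.last (2*k)) A
    have hCcard : C.card = 2*k - A.card := by
      rw [Finset.card_sdiff_of_subset (Finset.subset_univ _), Finset.card_insert_of_notMem hvA,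
        Finset.card_univ, Fintype.card_fin]
      omega
    let eC : Fin (2*k - A.card) → Fin (2*k+1) :=
      fun j => (C.equivFin.symm ⟨j, by rw [hCcard]; exact j.2⟩ : Fin (2*k+1))
    have heA_mem : ∀ j, eA j ∈ A := fun j => (A.equivFin.symm j).2
    have heA_inj : ∀ j j', eA j = eA j' → j = j' := by
      intro j j' h
      exact A.equivFin.symm.injective (Subtype.ext h)
    have heC_mem : ∀ j, eC j ∉ A ∧ eC j ≠ Fin.last (2*k) := by
      intro j
      have hmem : (eC j : Fin (2*k+1)) ∈ C := (C.equivFin.symm _).2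
      simp only [C, Finset.mem_sdiff, Finset.mem_insert] at hmem
      exact ⟨fun h => hmem.2 (Or.inr h), fun h => hmem.2 (Or.inl h)⟩
    have heC_inj : ∀ j j', eC j = eC j' → j = j' := by
      intro j j' h
      have h2 := C.equivFin.symm.injective (Subtype.ext h)
      rw [Fin.mk.injEq] at h2
      exact Fin.ext h2
    have heA_ne_v : ∀ j, eA j ≠ Fin.last (2*k) := by
      intro j h
      exact hvA (h ▸ heA_mem j)
    clear_value eA eC
    -- the relabelling
    have hb1 : ∀ x, x < min A.card k → x < A.card := by
      intro x h
      omega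
    have hb2 : ∀ x, x < 2*k - (A.card - k) → x - min A.card k < 2*k - A.card := by
      intro x h
      omega
    have hb3 : ∀ x, ¬ x < 2*k - (A.card - k) → x < 2*k →
        min A.card k + (x - (2*k - (A.card - k))) < A.card := by
      intro x h2 h3
      omega
    set β : ℕ → Fin (2*k+1) := fun x =>
      if h1 : x < min A.card k then eA ⟨x, hb1 x h1⟩
      else if h2 : x < 2*k - (A.card - k) then eC ⟨x - min A.card k, hb2 x h2⟩
      else if h3 : x < 2*k then eA ⟨min A.card k + (x - (2*k - (A.card - k))), hb3 x h2 h3⟩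
      else Fin.last (2*k) with hβdef
    have hβmem : ∀ x < 2*k, (β x ∈ A ↔ (x < min A.card k ∨ 2*k - (A.card - k) ≤ x)) := by
      intro x hx
      simp only [hβdef]
      split_ifs with h1 h2 h3
      all_goals first
        | (exact absurd hx h3)
        | (simp only [heA_mem, true_iff]
           omega)
        | (constructor
           · intro h
             exact absurd h (heC_mem _).1
           · intro hor
             exact absurd hor (by omega))
    have hβv : ∀ x < 2*k, β x ≠ Fin.last (2*k) := by
      intro x hx
      simp only [hβdef]
      split_ifs with h1 h2 h3
      all_goals first
        | (exact absurd hx h3)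
        | (exact heA_ne_v _)
        | (exact (heC_mem _).2)
    have hβi : ∀ x < 2*k, ∀ y < 2*k, β x = β y → x = y := by
      intro x hx y hy h
      simp only [hβdef] at h
      split_ifs at h with h1 h2 h3 h4 h5 h6 h7 h8 h9 h10 h11 h12 h13 h14 h15
      all_goals first
        | (exact absurd h (heA_ne_v _))
        | (exact absurd h.symm (heA_ne_v _))
        | (exact absurd h (heC_mem _).2)
        | (exact absurd h.symm (heC_mem _).2)
        | (exact ((heC_mem _).1 ((congrArg (· ∈ A) h).mp (heA_mem _))).elim)
        | (exact ((heC_mem _).1 ((congrArg (· ∈ A) h.symm).mp (heA_mem _))).elim)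
        | (have hval := heA_inj _ _ h
           rw [Fin.mk.injEq] at hval
           omega)
        | (have hval := heC_inj _ _ h
           rw [Fin.mk.injEq] at hval
           omega)
        | omega
    -- the graph with the star removed
    set GA := (⊤ : SimpleGraph (Fin (2 * k + 1))).deleteEdges
      {e | ∃ u ∈ A, e = s(Fin.last (2 * k), u)} with hGA
    have hstar : ∀ (x y : Fin (2*k+1)), x ≠ Fin.last (2*k) →
        (s(x,y) ∈ {e | ∃ u ∈ A, e = s(Fin.last (2 * k), u)} → y = Fin.last (2*k) ∧ x ∈ A) := by
      intro x y hxv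
      rintro ⟨u, hu, hs⟩
      rcases Sym2.eq_iff.1 hs with ⟨h1, h2⟩ | ⟨h1, h2⟩
      · exact absurd h1 hxv
      · refine ⟨h2, ?_⟩
        rw [h1]
        exact hu
    let S2 : Setup k := {
      G := GA
      β := β
      a := min A.card k
      r := A.card - k
      hk := hk'
      ha := by omega
      hr := by omega
      har := by omega
      hβi := hβi
      hβv := hβv
      hcc := by
        intro x hx y hy hxy
        rw [hGA, SimpleGraph.deleteEdges_adj, SimpleGraph.top_adj]
        refine ⟨fun h => hxy (hβi x hx y hy h), fun hmem => ?_⟩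
        exact (hβv y hy) (hstar _ _ (hβv x hx) hmem).1
      hv1 := by
        intro i hi
        rw [hGA, SimpleGraph.deleteEdges_adj, SimpleGraph.top_adj]
        refine ⟨hβv (i+k) (by omega), fun hmem => ?_⟩
        have := (hstar _ _ (hβv (i+k) (by omega)) hmem).2
        rw [hβmem (i+k) (by omega)] at this
        omega
      hv2 := by
        intro i hia hik
        rw [hGA, SimpleGraph.deleteEdges_adj, SimpleGraph.top_adj]
        have hne : Fin.last (2*k) ≠ β i := fun h => (hβv i (by omega)) h.symm
        refine ⟨hne, fun hmem => ?_⟩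
        rw [Sym2.eq_swap] at hmem
        have := (hstar _ _ (hβv i (by omega)) hmem).2
        rw [hβmem i (by omega)] at this
        omega }
    -- the edge finset of the graph with the star removed
    let E2 : Finset (Sym2 (Fin (2*k+1))) :=
      (⊤ : SimpleGraph (Fin (2*k+1))).edgeFinset \ A.image (fun u => s(Fin.last (2*k), u))
    have hE2 : ∀ e, e ∈ E2 ↔ e ∈ GA.edgeSet := by
      intro e
      rw [hGA, SimpleGraph.edgeSet_deleteEdges, Set.mem_diff]
      simp only [E2, Finset.mem_sdiff, SimpleGraph.mem_edgeFinset, Finset.mem_image,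
        Set.mem_setOf_eq]
      constructor
      · rintro ⟨h1, h2⟩
        exact ⟨h1, fun ⟨u, hu, hs⟩ => h2 ⟨u, hu, hs.symm⟩⟩
      · rintro ⟨h1, h2⟩
        exact ⟨h1, fun ⟨u, hu, hs⟩ => h2 ⟨u, hu, hs.symm⟩⟩
    have himg_sub : A.image (fun u => s(Fin.last (2*k), u))
        ⊆ (⊤ : SimpleGraph (Fin (2*k+1))).edgeFinset := by
      intro e he
      rw [Finset.mem_image] at he
      obtain ⟨u, hu, rfl⟩ := he
      rw [SimpleGraph.mem_edgeFinset, SimpleGraph.mem_edgeSet, SimpleGraph.top_adj]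
      intro h
      exact hvA (h ▸ hu)
    have himg_card : (A.image (fun u => s(Fin.last (2*k), u))).card = A.card := by
      rw [Finset.card_image_of_injOn]
      intro u hu u' hu' h
      rcases Sym2.eq_iff.1 h with ⟨_, h2⟩ | ⟨h1, h2⟩
      · exact h2
      · exact absurd (h2 ▸ hu) hvA
    have hE2card : E2.card + (min A.card k + (A.card - k)) = 2*k*k + k := by
      have hE2c : E2.card = (2*k*k + k) - A.card := by
        simp only [E2]
        rw [Finset.card_sdiff_of_subset himg_sub, himg_card, hcard_top]
      have haux : 2*k ≤ 2*k*k := Nat.le_mul_of_pos_right (2*k) hk'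
      omega
    exact ⟨S2.decompList, S2.decompList_isPathDecomp E2 hE2 hE2card,
      le_of_eq S2.decompList_length⟩
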